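/- Let X⋆ ∈ ℝ^{I₁×I₂×I₃} have tubal rank R with skinny t-SVD X⋆ = U⋆*Σ⋆*V⋆ᵀ and factors L⋆ := U⋆*Σ⋆^{1/2}, R⋆ := V⋆*Σ⋆^{1/2}. Given any L ∈ ℝ^{I₁×R×I₃}, R ∈ ℝ^{I₂×R×I₃} and any Q, Q̃ ∈ GL(R), assume ‖(L*Q − L⋆)*Σ⋆^{−1/2}‖_op ∨ ‖(R*Q^{−ᵀ} − R⋆)*Σ⋆^{−1/2}‖_op < 1. Then ‖Σ⋆^{1/2}*Q̃⁻¹*Q*Σ⋆^{1/2} − Σ⋆‖_op ≤ ‖R*(Q̃^{−ᵀ} − Q^{−ᵀ})*Σ⋆^{1/2}‖_op / (1 − ‖(R*Q^{−ᵀ} − R⋆)*Σ⋆^{−1/2}‖_op), and ‖Σ⋆^{1/2}*Q̃ᵀ*Q^{−ᵀ}*Σ⋆^{1/2} − Σ⋆‖_op ≤ ‖L*(Q̃ − Q)*Σ⋆^{1/2}‖_op / (1 − ‖(L*Q − L⋆)*Σ⋆^{−1/2}‖_op). -/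

import Mathlib

open scoped BigOperators
open Matrix

/-- An order-3 real tensor. -/
abbrev Tensor (I₁ I₂ I₃ : ℕ) := Fin I₁ → Fin I₂ → Fin I₃ → ℝ

namespace RTPCA

variable {I₁ I₂ I₃ J R : ℕ}

/-- The t-product, computed by circular convolution along the third mode
(equivalently, slice-wise products in the Fourier domain). -/
noncomputable def tprod (A : Tensor I₁ I₂ I₃) (B : Tensor I₂ J I₃) : Tensor I₁ J I₃ :=
  fun i j k => ∑ l : Fin I₂, ∑ t : Fin I₃, A i l t * B l j (k - t)

/-- The tensor transpose: transpose each frontal slice and reverse the order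
of the frontal slices 2 through I₃. -/
def tT (A : Tensor I₁ I₂ I₃) : Tensor I₂ I₁ I₃ :=
  fun j i k => A i j (-k)

/-- The identity tensor: first frontal slice is the identity, the rest are zero. -/
def idT (R I₃ : ℕ) : Tensor R R I₃ :=
  fun i j k => if i = j ∧ (k : ℕ) = 0 then 1 else 0

/-- Discrete Fourier transform along the third mode. -/
noncomputable def dft (A : Tensor I₁ I₂ I₃) (i : Fin I₁) (j : Fin I₂) (k : Fin I₃) : ℂ :=
  ∑ t : Fin I₃, (A i j t : ℂ) *
    Complex.exp (-(2 * Real.pi * Complex.I * (k.val : ℂ) * (t.val : ℂ)) / (I₃ : ℂ))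

/-- Fourier-domain frontal slice. -/
noncomputable def fSlice (A : Tensor I₁ I₂ I₃) (k : Fin I₃) : Matrix (Fin I₁) (Fin I₂) ℂ :=
  Matrix.of fun i j => dft A i j k

/-- Inverse DFT along the third mode (real part). -/
noncomputable def invDft (F : Fin I₁ → Fin I₂ → Fin I₃ → ℂ) : Tensor I₁ I₂ I₃ :=
  fun i j t =>
    ((∑ k : Fin I₃, F i j k *
      Complex.exp ((2 * Real.pi * Complex.I * (k.val : ℂ) * (t.val : ℂ)) / (I₃ : ℂ))) / (I₃ : ℂ)).re

/-- Squared Frobenius norm. -/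
noncomputable def fro2 (A : Tensor I₁ I₂ I₃) : ℝ := ∑ i, ∑ j, ∑ k, (A i j k) ^ 2

/-- Frobenius norm. -/
noncomputable def froNorm (A : Tensor I₁ I₂ I₃) : ℝ := Real.sqrt (fro2 A)

/-- Entrywise sup norm ‖A‖_∞. -/
noncomputable def infNorm (A : Tensor I₁ I₂ I₃) : ℝ := ⨆ i, ⨆ j, ⨆ k, |A i j k|

/-- ℓ_{2,∞} norm: largest ℓ₂ norm of a horizontal slice. -/
noncomputable def twoInfNorm (A : Tensor I₁ I₂ I₃) : ℝ :=
  ⨆ i, Real.sqrt (∑ j, ∑ k, (A i j k) ^ 2)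

/-- ℓ_{1,∞} norm: largest ℓ₁ norm of a horizontal slice. -/
noncomputable def oneInfNorm (A : Tensor I₁ I₂ I₃) : ℝ := ⨆ i, ∑ j, ∑ k, |A i j k|

/-- Spectral norm (largest singular value) of a complex matrix. -/
noncomputable def matSpecNorm {m n : ℕ} (M : Matrix (Fin m) (Fin n) ℂ) : ℝ :=
  ‖LinearMap.toContinuousLinearMap (Matrix.toEuclideanLin M)‖

/-- Tensor spectral norm = tensor operator norm: the largest singular value of
the Fourier-domain frontal slices. -/
noncomputable def specNorm (A : Tensor I₁ I₂ I₃) : ℝ :=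
  ⨆ k : Fin I₃, matSpecNorm (fSlice A k)

/-- f-diagonal in the Fourier domain with strictly positive diagonal entries. -/
def FDiagPos (S : Tensor R R I₃) : Prop :=
  (∀ k, ∀ i j : Fin R, i ≠ j → fSlice S k i j = 0) ∧
  (∀ k, ∀ i : Fin R, 0 < (fSlice S k i i).re ∧ (fSlice S k i i).im = 0)

/-- f-diagonal in the Fourier domain with nonnegative diagonal entries. -/
def FDiagNonneg (S : Tensor R R I₃) : Prop :=
  (∀ k, ∀ i j : Fin R, i ≠ j → fSlice S k i j = 0) ∧
  (∀ k, ∀ i : Fin R, 0 ≤ (fSlice S k i i).re ∧ (fSlice S k i i).im = 0)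

/-- Skinny t-SVD with tubal rank R (strictly positive Fourier-domain diagonal). -/
structure IsSkinnyTSVD (X : Tensor I₁ I₂ I₃) (U : Tensor I₁ R I₃)
    (S : Tensor R R I₃) (V : Tensor I₂ R I₃) : Prop where
  decomp : X = tprod (tprod U S) (tT V)
  orthU : tprod (tT U) U = idT R I₃
  orthV : tprod (tT V) V = idT R I₃
  diag : FDiagPos S

/-- Skinny t-SVD with tubal rank at most R (nonnegative diagonal allowed). -/
structure IsSkinnyTSVDLe (X : Tensor I₁ I₂ I₃) (U : Tensor I₁ R I₃)
    (S : Tensor R R I₃) (V : Tensor I₂ R I₃) : Prop where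
  decomp : X = tprod (tprod U S) (tT V)
  orthU : tprod (tT U) U = idT R I₃
  orthV : tprod (tT V) V = idT R I₃
  diag : FDiagNonneg S

/-- σ_min: the smallest Fourier-domain diagonal entry of Σ. -/
noncomputable def sigmaMin (S : Tensor R R I₃) : ℝ :=
  ⨅ k : Fin I₃, ⨅ i : Fin R, (fSlice S k i i).re

/-- σ_max (= σ₁): the largest Fourier-domain diagonal entry of Σ. -/
noncomputable def sigmaMax (S : Tensor R R I₃) : ℝ :=
  ⨆ k : Fin I₃, ⨆ i : Fin R, (fSlice S k i i).re

/-- Condition number κ = σ_max / σ_min. -/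
noncomputable def condNum (S : Tensor R R I₃) : ℝ := sigmaMax S / sigmaMin S

/-- Σ^{1/2}: entrywise square roots in the Fourier domain. -/
noncomputable def sqrtT (S : Tensor R R I₃) : Tensor R R I₃ :=
  invDft fun i j k => (Real.sqrt ((dft S i j k).re) : ℂ)

/-- Σ^{-1/2}: entrywise reciprocal square roots in the Fourier domain. -/
noncomputable def invSqrtT (S : Tensor R R I₃) : Tensor R R I₃ :=
  invDft fun i j k => (((Real.sqrt ((dft S i j k).re))⁻¹ : ℝ) : ℂ)

/-- `Qi` is a two-sided t-product inverse of `Q` (i.e. `Q ∈ GL(R)`). -/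
def TInv (Q Qi : Tensor R R I₃) : Prop :=
  tprod Q Qi = idT R I₃ ∧ tprod Qi Q = idT R I₃

/-- Alignment error (the quantity inside the infimum defining `distT`)
for a given invertible Q with inverse Qi. -/
noncomputable def alignErr (L Ls : Tensor I₁ R I₃) (Rt Rs : Tensor I₂ R I₃)
    (Sh : Tensor R R I₃) (Q Qi : Tensor R R I₃) : ℝ :=
  Real.sqrt ((froNorm (tprod (tprod L Q - Ls) Sh)) ^ 2 +
    (froNorm (tprod (tprod Rt (tT Qi) - Rs) Sh)) ^ 2)

/-- The distance metric dist(L,R;L⋆,R⋆): the infimum of alignment errors over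
invertible tensors Q, where `Sh` is Σ⋆^{1/2}. -/
noncomputable def distT (L Ls : Tensor I₁ R I₃) (Rt Rs : Tensor I₂ R I₃)
    (Sh : Tensor R R I₃) : ℝ :=
  sInf {d : ℝ | ∃ Q Qi : Tensor R R I₃, TInv Q Qi ∧ d = alignErr L Ls Rt Rs Sh Q Qi}

/-- Q (with inverse Qi) is an optimal alignment tensor: it attains the infimum
defining the distance metric. -/
def IsOptAlign (L Ls : Tensor I₁ R I₃) (Rt Rs : Tensor I₂ R I₃)
    (Sh : Tensor R R I₃) (Q Qi : Tensor R R I₃) : Prop :=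
  TInv Q Qi ∧ alignErr L Ls Rt Rs Sh Q Qi = distT L Ls Rt Rs Sh

/-- Entrywise soft-thresholding. -/
noncomputable def softThresh (ζ : ℝ) (A : Tensor I₁ I₂ I₃) : Tensor I₁ I₂ I₃ :=
  fun i j k => Real.sign (A i j k) * max 0 (|A i j k| - ζ)

/-- Support: the set of index triples at which the tensor is nonzero. -/
def supp (A : Tensor I₁ I₂ I₃) : Set (Fin I₁ × Fin I₂ × Fin I₃) :=
  {p | A p.1 p.2.1 p.2.2 ≠ 0}

/-- α-sparsity: every horizontal, lateral and frontal slice has at most an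
α fraction of nonzero entries. -/
def IsSparse (α : ℝ) (S : Tensor I₁ I₂ I₃) : Prop :=
  (∀ i₁ : Fin I₁, ({p : Fin I₂ × Fin I₃ | S i₁ p.1 p.2 ≠ 0}.ncard : ℝ) ≤ α * I₂ * I₃) ∧
  (∀ i₂ : Fin I₂, ({p : Fin I₁ × Fin I₃ | S p.1 i₂ p.2 ≠ 0}.ncard : ℝ) ≤ α * I₁ * I₃) ∧
  (∀ i₃ : Fin I₃, ({p : Fin I₁ × Fin I₂ | S p.1 p.2 i₃ ≠ 0}.ncard : ℝ) ≤ α * I₁ * I₂)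

/-- Tensor μ-incoherence conditions for the skinny t-SVD factors U, V. -/
def Incoherent (μ : ℝ) (U : Tensor I₁ R I₃) (V : Tensor I₂ R I₃) : Prop :=
  twoInfNorm U ≤ Real.sqrt (μ * R / I₁) ∧ twoInfNorm V ≤ Real.sqrt (μ * R / I₂)

/-- Top-R truncated t-SVD of A: a skinny t-SVD-shaped factorization which, in
every Fourier-domain frontal slice, keeps R largest singular values together
with their singular vectors (the residual is orthogonal to the kept singular
vectors and its spectral norm is at most every kept singular value). -/
structure IsTruncTSVD (A : Tensor I₁ I₂ I₃) (U : Tensor I₁ R I₃)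
    (S : Tensor R R I₃) (V : Tensor I₂ R I₃) : Prop where
  orthU : tprod (tT U) U = idT R I₃
  orthV : tprod (tT V) V = idT R I₃
  diag : FDiagNonneg S
  leftOrth : ∀ k, (fSlice U k)ᴴ * (fSlice A k - fSlice (tprod (tprod U S) (tT V)) k) = 0
  rightOrth : ∀ k, (fSlice A k - fSlice (tprod (tprod U S) (tT V)) k) * fSlice V k = 0
  topR : ∀ k, ∀ r : Fin R,
    matSpecNorm (fSlice A k - fSlice (tprod (tprod U S) (tT V)) k) ≤ (fSlice S k r r).re

end RTPCA

open RTPCA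


namespace AuxPf
open Complex RTPCA

noncomputable def ew (n : ℕ) (m : ℤ) : ℂ := Complex.exp (2 * Real.pi * Complex.I * m / n)

lemma ew_add (n : ℕ) (a b : ℤ) : ew n (a + b) = ew n a * ew n b := by
  rw [ew, ew, ew, ← Complex.exp_add]; congr 1; push_cast; ring

lemma ew_int_mul (n : ℕ) (hn : n ≠ 0) (m : ℤ) : ew n (m * n) = 1 := by
  rw [ew]
  have h : (2 * Real.pi * Complex.I * ((m * n : ℤ) : ℂ) / n : ℂ) = m * (2 * Real.pi * Complex.I) := by
    have : (n : ℂ) ≠ 0 := Nat.cast_ne_zero.mpr hn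
    field_simp; push_cast; ring
  rw [h]
  simpa [mul_comm, mul_assoc] using Complex.exp_int_mul_two_pi_mul_I m

lemma ew_mod (n : ℕ) (hn : n ≠ 0) {a b : ℤ} (h : a ≡ b [ZMOD n]) : ew n a = ew n b := by
  obtain ⟨c, hc⟩ := h.dvd
  have hab : a = b + (-c) * n := by linear_combination -hc
  rw [hab, ew_add, ew_int_mul n hn, mul_one]

lemma ew_conj (n : ℕ) (m : ℤ) : (starRingEnd ℂ) (ew n m) = ew n (-m) := by
  rw [ew, ew, ← Complex.exp_conj]
  congr 1
  simp [map_div₀, _root_.map_mul, map_ofNat, Complex.conj_I]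

lemma ew_pow (n : ℕ) (d : ℤ) (t : ℕ) : ew n d ^ t = ew n (d * t) := by
  rw [ew, ew, ← Complex.exp_nat_mul]
  congr 1; push_cast; ring

lemma sum_ew (n : ℕ) (hn : n ≠ 0) (d : ℤ) :
    ∑ t : Fin n, ew n (d * t.val) = if (n : ℤ) ∣ d then (n : ℂ) else 0 := by
  by_cases hd : (n : ℤ) ∣ d
  · obtain ⟨c, rfl⟩ := hd
    rw [if_pos (dvd_mul_right _ _)]
    have h1 : ∀ t : Fin n, ew n ((n * c) * t.val) = 1 := fun t => by
      have he : ((n : ℤ) * c) * t.val = (c * t.val) * n := by ring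
      rw [he, ew_int_mul n hn]
    simp [h1]
  · rw [if_neg hd]
    have hz : ew n d ≠ 1 := by
      intro h1
      rw [ew, Complex.exp_eq_one_iff] at h1
      obtain ⟨m, hm⟩ := h1
      apply hd
      refine ⟨m, ?_⟩
      have hπ : (2 : ℂ) * Real.pi * Complex.I ≠ 0 := by
        simp [Real.pi_ne_zero, Complex.I_ne_zero]
      have hnc : (n : ℂ) ≠ 0 := Nat.cast_ne_zero.mpr hn
      have hdc : (d : ℂ) = n * m := by
        field_simp at hm
        have h2 : (d : ℂ) * (2 * Real.pi * Complex.I) = (n * m) * (2 * Real.pi * Complex.I) := by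
          linear_combination (2 * Real.pi * Complex.I) * hm
        exact mul_right_cancel₀ hπ h2
      exact_mod_cast hdc
    have hzn : ew n d ^ n = 1 := by rw [ew_pow]; exact ew_int_mul n hn d
    have hs : ∑ t : Fin n, ew n (d * t.val) = ∑ t ∈ Finset.range n, ew n d ^ t := by
      rw [Fin.sum_univ_eq_sum_range (fun t => ew n (d * t))]
      exact Finset.sum_congr rfl fun t _ => by rw [ew_pow]
    rw [hs, geom_sum_eq hz, hzn, sub_self, zero_div]

lemma emod_cast_modEq (n x : ℕ) : ((x % n : ℕ) : ℤ) ≡ (x : ℤ) [ZMOD n] := by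
  rw [Int.natCast_mod]; exact Int.emod_emod_of_dvd _ dvd_rfl

lemma fin_add_mod (n : ℕ) (a b : Fin n) : (((a + b : Fin n) : ℕ) : ℤ) ≡ (a : ℕ) + (b : ℕ) [ZMOD n] := by
  have h : ((a + b : Fin n) : ℕ) = ((a : ℕ) + b) % n := Fin.val_add a b
  rw [h]; exact (emod_cast_modEq n _).trans (by push_cast; rfl)

lemma fin_neg_mod (n : ℕ) (a : Fin n) : (((-a : Fin n) : ℕ) : ℤ) ≡ -(a : ℕ) [ZMOD n] := by
  have h : ((-a : Fin n) : ℕ) = (n - (a : ℕ)) % n := rfl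
  have ha : (a : ℕ) < n := a.isLt
  rw [h]
  refine (emod_cast_modEq n _).trans ?_
  rw [Nat.cast_sub ha.le]
  exact Int.ModEq.symm (Int.modEq_iff_dvd.mpr ⟨1, by ring⟩)

lemma fin_sub_mod (n : ℕ) (a b : Fin n) : (((a - b : Fin n) : ℕ) : ℤ) ≡ (a : ℕ) - (b : ℕ) [ZMOD n] := by
  have hb : (b : ℕ) < n := b.isLt
  have h2 : ((a - b : Fin n) : ℕ) = (n - (b:ℕ) + a) % n := by rw [Fin.sub_def]
  rw [h2]
  refine (emod_cast_modEq n _).trans ?_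
  push_cast [Nat.cast_sub hb.le]
  exact Int.ModEq.symm (Int.modEq_iff_dvd.mpr ⟨1, by ring⟩)

variable {I₁ I₂ I₃ J R : ℕ}

lemma dft_eq_ew (A : Tensor I₁ I₂ I₃) (i : Fin I₁) (j : Fin I₂) (k : Fin I₃) :
    dft A i j k = ∑ t : Fin I₃, (A i j t : ℂ) * ew I₃ (-((k : ℕ) * (t : ℕ))) := by
  unfold dft ew
  refine Finset.sum_congr rfl fun t _ => ?_
  congr 2
  push_cast; ring

end AuxPf

namespace AuxPf
open Complex RTPCA
variable {I₁ I₂ I₃ J R : ℕ}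

lemma ew_zero (n : ℕ) : ew n 0 = 1 := by simp [ew]

lemma fSlice_apply (A : Tensor I₁ I₂ I₃) (k : Fin I₃) (i j) : fSlice A k i j = dft A i j k := rfl

lemma fSlice_tprod (A : Tensor I₁ I₂ I₃) (B : Tensor I₂ J I₃) (k : Fin I₃) :
    fSlice (tprod A B) k = fSlice A k * fSlice B k := by
  have hn : I₃ ≠ 0 := fun h => (h ▸ k).elim0
  haveI : NeZero I₃ := ⟨hn⟩
  ext i j
  show dft (tprod A B) i j k = ∑ l, dft A i l k * dft B l j k
  simp only [dft_eq_ew]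
  have htp : ∀ u : Fin I₃, tprod A B i j u = ∑ l : Fin I₂, ∑ t : Fin I₃, A i l t * B l j (u - t) :=
    fun u => rfl
  simp only [htp]
  push_cast
  simp only [Finset.sum_mul]
  rw [Finset.sum_comm]
  refine Finset.sum_congr rfl fun l _ => ?_
  rw [Finset.sum_comm]
  refine Finset.sum_congr rfl fun t _ => ?_
  have key : ∑ u : Fin I₃, (B l j (u - t) : ℂ) * ew I₃ (-((k:ℕ) * (u:ℕ)))
      = ew I₃ (-((k:ℕ) * (t:ℕ))) * ∑ s : Fin I₃, (B l j s : ℂ) * ew I₃ (-((k:ℕ) * (s:ℕ))) := by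
    rw [Finset.mul_sum,
      ← Equiv.sum_comp (Equiv.addLeft t) (fun u => (B l j (u - t) : ℂ) * ew I₃ (-((k:ℕ) * (u:ℕ))))]
    refine Finset.sum_congr rfl fun s _ => ?_
    have h1 : (Equiv.addLeft t) s - t = s := by
      simp [Equiv.addLeft]
    have hm : (-(((k:ℕ):ℤ) * (((Equiv.addLeft t) s : Fin I₃) : ℕ)))
        ≡ -((k:ℕ) * (t:ℕ)) + -((k:ℕ) * (s:ℕ)) [ZMOD I₃] := by
      have h2 := ((fin_add_mod I₃ t s).mul_left ((k:ℕ):ℤ)).neg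
      have h3 : (Equiv.addLeft t) s = t + s := rfl
      rw [h3]
      refine h2.trans ?_
      have : -(((k:ℕ):ℤ) * ((t:ℕ) + (s:ℕ))) = -((k:ℕ) * (t:ℕ)) + -((k:ℕ) * (s:ℕ)) := by push_cast; ring
      rw [this]
    rw [h1, ew_mod I₃ hn hm, ew_add]
    ring
  have hpull : ∑ u : Fin I₃, ((A i l t : ℂ) * (B l j (u - t) : ℂ)) * ew I₃ (-((k:ℕ) * (u:ℕ)))
      = (A i l t : ℂ) * ∑ u : Fin I₃, (B l j (u - t) : ℂ) * ew I₃ (-((k:ℕ) * (u:ℕ))) := by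
    rw [Finset.mul_sum]
    exact Finset.sum_congr rfl fun u _ => by ring
  rw [hpull, key]
  ring

lemma fSlice_tT (A : Tensor I₁ I₂ I₃) (k : Fin I₃) : fSlice (tT A) k = (fSlice A k)ᴴ := by
  have hn : I₃ ≠ 0 := fun h => (h ▸ k).elim0
  haveI : NeZero I₃ := ⟨hn⟩
  ext j i
  show dft (tT A) j i k = starRingEnd ℂ (dft A i j k)
  simp only [dft_eq_ew, map_sum, _root_.map_mul, Complex.conj_ofReal, ew_conj, neg_neg]
  have htt : ∀ t : Fin I₃, tT A j i t = A i j (-t) := fun t => rfl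
  simp only [htt]
  rw [← Equiv.sum_comp (Equiv.neg (Fin I₃)) (fun t => (A i j (-t) : ℂ) * ew I₃ (-((k:ℕ) * (t:ℕ))))]
  refine Finset.sum_congr rfl fun t _ => ?_
  have h1 : (Equiv.neg (Fin I₃)) t = -t := rfl
  rw [h1, neg_neg]
  congr 1
  refine ew_mod I₃ hn ?_
  have h2 := ((fin_neg_mod I₃ t).mul_left ((k:ℕ):ℤ)).neg
  refine h2.trans ?_
  have : -(((k:ℕ):ℤ) * -(t:ℕ)) = ((k:ℕ):ℤ) * (t:ℕ) := by ring
  rw [this]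

lemma dft_sub (A B : Tensor I₁ I₂ I₃) (i j) (k : Fin I₃) :
    dft (A - B) i j k = dft A i j k - dft B i j k := by
  unfold dft
  rw [← Finset.sum_sub_distrib]
  refine Finset.sum_congr rfl fun t _ => ?_
  have : (A - B) i j t = A i j t - B i j t := rfl
  rw [this]
  push_cast
  ring

lemma fSlice_sub (A B : Tensor I₁ I₂ I₃) (k : Fin I₃) :
    fSlice (A - B) k = fSlice A k - fSlice B k := by
  ext i j; exact dft_sub A B i j k

lemma fSlice_idT (k : Fin I₃) : fSlice (idT R I₃) k = (1 : Matrix (Fin R) (Fin R) ℂ) := by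
  have hn : I₃ ≠ 0 := fun h => (h ▸ k).elim0
  haveI : NeZero I₃ := ⟨hn⟩
  ext i j
  show dft (idT R I₃) i j k = _
  rw [dft_eq_ew]
  by_cases hij : i = j
  · subst hij
    rw [Finset.sum_eq_single (0 : Fin I₃)]
    · simp [idT, Matrix.one_apply, ew_zero]
    · intro t _ ht
      have : (t : ℕ) ≠ 0 := fun h0 => ht (Fin.ext h0)
      simp [idT, this]
    · intro habs; exact absurd (Finset.mem_univ _) habs
  · simp [idT, hij, Matrix.one_apply]

end AuxPf
namespace AuxPf
open Complex RTPCA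
variable {I₁ I₂ I₃ J R : ℕ}

lemma dft_neg_conj (A : Tensor I₁ I₂ I₃) (i : Fin I₁) (j : Fin I₂) (k : Fin I₃) :
    dft A i j (-k) = starRingEnd ℂ (dft A i j k) := by
  have hn : I₃ ≠ 0 := fun h => (h ▸ k).elim0
  simp only [dft_eq_ew, map_sum, _root_.map_mul, Complex.conj_ofReal, ew_conj]
  refine Finset.sum_congr rfl fun t _ => ?_
  congr 1
  refine ew_mod I₃ hn ?_
  have h2 := ((fin_neg_mod I₃ k).mul_right ((t:ℕ):ℤ)).neg
  refine h2.trans ?_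
  have h3 : -((-((k:ℕ):ℤ)) * (t:ℕ)) = ((k:ℕ):ℤ) * (t:ℕ) := by ring
  rw [h3, neg_neg]

lemma dft_invDft (F : Fin I₁ → Fin I₂ → Fin I₃ → ℂ)
    (hF : ∀ i j (k : Fin I₃), F i j (-k) = starRingEnd ℂ (F i j k))
    (i : Fin I₁) (j : Fin I₂) (k : Fin I₃) : dft (invDft F) i j k = F i j k := by
  have hn : I₃ ≠ 0 := fun h => (h ▸ k).elim0
  haveI : NeZero I₃ := ⟨hn⟩
  have hnc : (I₃ : ℂ) ≠ 0 := Nat.cast_ne_zero.mpr hn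
  set z : Fin I₃ → ℂ := fun t => ∑ m : Fin I₃, F i j m * ew I₃ ((m : ℕ) * (t : ℕ)) with hz
  have hzr : ∀ t, starRingEnd ℂ (z t) = z t := by
    intro t
    rw [hz]
    simp only [map_sum, _root_.map_mul, ew_conj]
    rw [← Equiv.sum_comp (Equiv.neg (Fin I₃))
      (fun m => starRingEnd ℂ (F i j m) * ew I₃ (-((m : ℕ) * (t : ℕ))))]
    refine Finset.sum_congr rfl fun m _ => ?_
    have h1 : (Equiv.neg (Fin I₃)) m = -m := rfl
    rw [h1, hF i j m, Complex.conj_conj]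
    congr 1
    refine ew_mod I₃ hn ?_
    have h2 := ((fin_neg_mod I₃ m).mul_right ((t:ℕ):ℤ)).neg
    refine h2.trans ?_
    have h3 : -((-((m:ℕ):ℤ)) * (t:ℕ)) = ((m:ℕ):ℤ) * (t:ℕ) := by ring
    rw [h3]
  have hinv : ∀ t : Fin I₃, ((invDft F i j t : ℝ) : ℂ) = z t / I₃ := by
    intro t
    have he : ∑ m : Fin I₃, F i j m *
        Complex.exp ((2 * Real.pi * Complex.I * (m.val : ℂ) * (t.val : ℂ)) / (I₃ : ℂ)) = z t := by
      refine Finset.sum_congr rfl fun m _ => ?_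
      congr 1
      rw [ew]
      congr 1
      push_cast
      ring
    have hq : invDft F i j t = (z t / I₃).re := by
      rw [invDft, he]
    rw [hq]
    refine Complex.conj_eq_iff_re.mp ?_
    rw [map_div₀, hzr t, Complex.conj_natCast]
  rw [dft_eq_ew]
  calc ∑ t : Fin I₃, ((invDft F i j t : ℝ) : ℂ) * ew I₃ (-((k:ℕ) * (t:ℕ)))
      = (∑ t : Fin I₃, z t * ew I₃ (-((k:ℕ) * (t:ℕ)))) / I₃ := by
        rw [Finset.sum_div]
        refine Finset.sum_congr rfl fun t _ => ?_
        rw [hinv t]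
        ring
    _ = (∑ m : Fin I₃, F i j m * ∑ t : Fin I₃, ew I₃ ((((m:ℕ):ℤ) - ((k:ℕ):ℤ)) * (t:ℕ))) / I₃ := by
        congr 1
        simp only [hz, Finset.sum_mul]
        rw [Finset.sum_comm]
        refine Finset.sum_congr rfl fun m _ => ?_
        rw [Finset.mul_sum]
        refine Finset.sum_congr rfl fun t _ => ?_
        rw [mul_assoc, ← ew_add]
        congr 2
        ring
    _ = (F i j k * I₃) / I₃ := by
        congr 1
        rw [Finset.sum_eq_single k]
        · rw [sub_self, sum_ew I₃ hn 0, if_pos (dvd_zero _)]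
        · intro m _ hm
          rw [sum_ew I₃ hn _, if_neg, mul_zero]
          intro hdvd
          have habs : |((m:ℕ):ℤ) - ((k:ℕ):ℤ)| < I₃ := by
            have hm1 : (m:ℕ) < I₃ := m.isLt
            have hk1 : (k:ℕ) < I₃ := k.isLt
            rw [abs_lt]
            omega
          have h0 := Int.eq_zero_of_abs_lt_dvd hdvd habs
          have : (m:ℕ) = (k:ℕ) := by omega
          exact hm (Fin.ext this)
        · intro habs; exact absurd (Finset.mem_univ _) habs
    _ = F i j k := by
        rw [mul_div_assoc, div_self hnc, mul_one]

lemma fSlice_invDft (F : Fin I₁ → Fin I₂ → Fin I₃ → ℂ)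
    (hF : ∀ i j (k : Fin I₃), F i j (-k) = starRingEnd ℂ (F i j k)) (k : Fin I₃) :
    fSlice (invDft F) k = Matrix.of (fun i j => F i j k) :=
  Matrix.ext fun i j => dft_invDft F hF i j k

lemma fSlice_sqrtT (S : Tensor R R I₃) (k : Fin I₃) :
    fSlice (sqrtT S) k = Matrix.of (fun i j => ((Real.sqrt ((fSlice S k i j).re) : ℝ) : ℂ)) := by
  rw [sqrtT, fSlice_invDft]
  · rfl
  · intro i j k'
    rw [dft_neg_conj, Complex.conj_ofReal]
    congr 2

lemma fSlice_invSqrtT (S : Tensor R R I₃) (k : Fin I₃) :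
    fSlice (invSqrtT S) k = Matrix.of (fun i j => (((Real.sqrt ((fSlice S k i j).re))⁻¹ : ℝ) : ℂ)) := by
  rw [invSqrtT, fSlice_invDft]
  · rfl
  · intro i j k'
    rw [dft_neg_conj, Complex.conj_ofReal]
    congr 3

end AuxPf
namespace AuxPf
open Complex RTPCA Matrix
open scoped Matrix.Norms.L2Operator
variable {I₁ I₂ I₃ J R : ℕ}

lemma matSpecNorm_eq {m n : ℕ} (M : Matrix (Fin m) (Fin n) ℂ) : matSpecNorm M = ‖M‖ := by
  rw [Matrix.l2_opNorm_def]; rfl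

lemma matSpecNorm_nonneg {m n : ℕ} (M : Matrix (Fin m) (Fin n) ℂ) : 0 ≤ matSpecNorm M := by
  rw [matSpecNorm_eq]; exact norm_nonneg M

lemma specNorm_nonneg (A : Tensor I₁ I₂ I₃) : 0 ≤ specNorm A :=
  Real.iSup_nonneg fun _ => matSpecNorm_nonneg _

lemma matSpecNorm_le_specNorm (A : Tensor I₁ I₂ I₃) (k : Fin I₃) :
    matSpecNorm (fSlice A k) ≤ specNorm A :=
  le_ciSup (f := fun k => matSpecNorm (fSlice A k))
    (Set.Finite.bddAbove (Set.finite_range _)) k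

lemma specNorm_le (A : Tensor I₁ I₂ I₃) {c : ℝ} (hc : 0 ≤ c)
    (h : ∀ k, matSpecNorm (fSlice A k) ≤ c) : specNorm A ≤ c :=
  Real.iSup_le h hc

lemma mul_isometry {n r s : ℕ} (W : Matrix (Fin n) (Fin r) ℂ) (hW : Wᴴ * W = 1)
    (X : Matrix (Fin r) (Fin s) ℂ) : ‖W * X‖ = ‖X‖ := by
  have h1 : (W * X)ᴴ * (W * X) = Xᴴ * X := by
    rw [conjTranspose_mul, Matrix.mul_assoc, ← Matrix.mul_assoc Wᴴ W X, hW, Matrix.one_mul]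
  have h2 := Matrix.l2_opNorm_conjTranspose_mul_self (W * X)
  rw [h1, Matrix.l2_opNorm_conjTranspose_mul_self X] at h2
  exact (mul_self_inj_of_nonneg (norm_nonneg _) (norm_nonneg _)).mp h2.symm

lemma key_ineq {n r : ℕ} (W P : Matrix (Fin n) (Fin r) ℂ)
    (A B C S2 S2i : Matrix (Fin r) (Fin r) ℂ)
    (hW : Wᴴ * W = 1) (hCB : C * B = 1) (hS : S2i * S2 = 1)
    (N ε : ℝ) (hN : ‖P * (A - C) * S2‖ ≤ N) (hε : ‖(P * C - W * S2) * S2i‖ ≤ ε)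
    (hε1 : ε < 1) :
    ‖S2 * (B * A - 1) * S2‖ ≤ N / (1 - ε) := by
  set M : Matrix (Fin r) (Fin r) ℂ := (B * A - 1) * S2 with hM
  set D : Matrix (Fin n) (Fin r) ℂ := (P * C - W * S2) * S2i with hD
  have hDS2 : D * S2 = P * C - W * S2 := by
    rw [hD, Matrix.mul_assoc, hS, Matrix.mul_one]
  have hWS2 : W * S2 = P * C - D * S2 := by rw [hDS2, sub_sub_cancel]
  have hPCM : (P * C) * M = P * (A - C) * S2 := by
    rw [hM, ← Matrix.mul_assoc, Matrix.mul_assoc P C (B * A - 1)]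
    congr 1
    rw [Matrix.mul_sub, Matrix.mul_one, ← Matrix.mul_assoc, hCB, Matrix.one_mul]
  have hkey : W * (S2 * M) = P * (A - C) * S2 - D * (S2 * M) := by
    calc W * (S2 * M) = (W * S2) * M := by rw [Matrix.mul_assoc]
      _ = (P * C) * M - (D * S2) * M := by rw [hWS2, Matrix.sub_mul]
      _ = P * (A - C) * S2 - D * (S2 * M) := by rw [hPCM, Matrix.mul_assoc D S2 M]
  have hiso : ‖S2 * M‖ = ‖W * (S2 * M)‖ := (mul_isometry W hW _).symm
  have e1 : ‖S2 * M‖ = ‖P * (A - C) * S2 - D * (S2 * M)‖ := by rw [hiso, hkey]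
  have hineq : ‖S2 * M‖ ≤ N + ε * ‖S2 * M‖ := by
    calc ‖S2 * M‖ = ‖P * (A - C) * S2 - D * (S2 * M)‖ := e1
      _ ≤ ‖P * (A - C) * S2‖ + ‖D * (S2 * M)‖ := norm_sub_le _ _
      _ ≤ N + ‖D‖ * ‖S2 * M‖ := add_le_add hN (Matrix.l2_opNorm_mul _ _)
      _ ≤ N + ε * ‖S2 * M‖ :=
          add_le_add le_rfl (mul_le_mul_of_nonneg_right (hD ▸ hε) (norm_nonneg _))
  have hfin : ‖S2 * (B * A - 1) * S2‖ = ‖S2 * M‖ := by rw [hM, Matrix.mul_assoc]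
  rw [hfin, le_div_iff₀ (by linarith : (0:ℝ) < 1 - ε)]
  linarith

end AuxPf
namespace AuxPf
open Complex RTPCA Matrix
open scoped Matrix.Norms.L2Operator
variable {I₃ R : ℕ}

lemma fSlice_diag (S : Tensor R R I₃) (hd : FDiagPos S) (k : Fin I₃) :
    fSlice S k = Matrix.diagonal (fun i => (((fSlice S k i i).re : ℝ) : ℂ)) := by
  ext i j
  by_cases hij : i = j
  · subst hij
    rw [Matrix.diagonal_apply_eq]
    exact Complex.ext (by simp) (by simp [(hd.2 k i).2])
  · rw [Matrix.diagonal_apply_ne _ hij]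
    exact hd.1 k i j hij

lemma fSlice_sqrtT_diag (S : Tensor R R I₃) (hd : FDiagPos S) (k : Fin I₃) :
    fSlice (sqrtT S) k
      = Matrix.diagonal (fun i => ((Real.sqrt ((fSlice S k i i).re) : ℝ) : ℂ)) := by
  rw [fSlice_sqrtT]
  ext i j
  by_cases hij : i = j
  · subst hij; rw [Matrix.diagonal_apply_eq]; rfl
  · rw [Matrix.diagonal_apply_ne _ hij]
    show ((Real.sqrt ((fSlice S k i j).re) : ℝ) : ℂ) = 0
    rw [hd.1 k i j hij]
    simp

lemma fSlice_invSqrtT_diag (S : Tensor R R I₃) (hd : FDiagPos S) (k : Fin I₃) :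
    fSlice (invSqrtT S) k
      = Matrix.diagonal (fun i => (((Real.sqrt ((fSlice S k i i).re))⁻¹ : ℝ) : ℂ)) := by
  rw [fSlice_invSqrtT]
  ext i j
  by_cases hij : i = j
  · subst hij; rw [Matrix.diagonal_apply_eq]; rfl
  · rw [Matrix.diagonal_apply_ne _ hij]
    show (((Real.sqrt ((fSlice S k i j).re))⁻¹ : ℝ) : ℂ) = 0
    rw [hd.1 k i j hij]
    simp

lemma sqrtT_mul_self (S : Tensor R R I₃) (hd : FDiagPos S) (k : Fin I₃) :
    fSlice (sqrtT S) k * fSlice (sqrtT S) k = fSlice S k := by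
  rw [fSlice_sqrtT_diag S hd k, Matrix.diagonal_mul_diagonal]
  conv_rhs => rw [fSlice_diag S hd k]
  refine congrArg Matrix.diagonal (funext fun i => ?_)
  rw [← Complex.ofReal_mul, Real.mul_self_sqrt (hd.2 k i).1.le]

lemma invSqrtT_mul_sqrtT (S : Tensor R R I₃) (hd : FDiagPos S) (k : Fin I₃) :
    fSlice (invSqrtT S) k * fSlice (sqrtT S) k = 1 := by
  rw [fSlice_invSqrtT_diag S hd k, fSlice_sqrtT_diag S hd k, Matrix.diagonal_mul_diagonal,
    ← Matrix.diagonal_one]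
  refine congrArg Matrix.diagonal (funext fun i => ?_)
  rw [← Complex.ofReal_mul,
    inv_mul_cancel₀ (ne_of_gt (Real.sqrt_pos.mpr (hd.2 k i).1)), Complex.ofReal_one]

lemma sqrtT_herm (S : Tensor R R I₃) (hd : FDiagPos S) (k : Fin I₃) :
    (fSlice (sqrtT S) k)ᴴ = fSlice (sqrtT S) k := by
  rw [fSlice_sqrtT_diag S hd k, Matrix.diagonal_conjTranspose]
  refine congrArg Matrix.diagonal (funext fun i => ?_)
  exact Complex.conj_ofReal _

lemma sig_herm (S : Tensor R R I₃) (hd : FDiagPos S) (k : Fin I₃) :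
    (fSlice S k)ᴴ = fSlice S k := by
  conv_lhs => rw [fSlice_diag S hd k]
  rw [Matrix.diagonal_conjTranspose]
  conv_rhs => rw [fSlice_diag S hd k]
  refine congrArg Matrix.diagonal (funext fun i => ?_)
  exact Complex.conj_ofReal _

end AuxPf

open AuxPf Matrix in
open scoped Matrix.Norms.L2Operator in
/-- perturbation bounds for the alignment tensor. -/
theorem alignment_perturbation
    {I₁ I₂ I₃ R : ℕ}
    (Xs : Tensor I₁ I₂ I₃) (Us : Tensor I₁ R I₃) (Sig : Tensor R R I₃) (Vs : Tensor I₂ R I₃)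
    (hsvd : IsSkinnyTSVD Xs Us Sig Vs)
    (L : Tensor I₁ R I₃) (Rt : Tensor I₂ R I₃)
    (Q Qi Qt Qti : Tensor R R I₃)
    (hQ : TInv Q Qi) (hQt : TInv Qt Qti)
    (h : max (specNorm (tprod (tprod L Q - tprod Us (sqrtT Sig)) (invSqrtT Sig)))
             (specNorm (tprod (tprod Rt (tT Qi) - tprod Vs (sqrtT Sig)) (invSqrtT Sig))) < 1) :
    specNorm (tprod (tprod (tprod (sqrtT Sig) Qti) Q) (sqrtT Sig) - Sig)
      ≤ specNorm (tprod (tprod Rt (tT Qti - tT Qi)) (sqrtT Sig))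
        / (1 - specNorm (tprod (tprod Rt (tT Qi) - tprod Vs (sqrtT Sig)) (invSqrtT Sig))) ∧
    specNorm (tprod (tprod (tprod (sqrtT Sig) (tT Qt)) (tT Qi)) (sqrtT Sig) - Sig)
      ≤ specNorm (tprod (tprod L (Qt - Q)) (sqrtT Sig))
        / (1 - specNorm (tprod (tprod L Q - tprod Us (sqrtT Sig)) (invSqrtT Sig))) := by
  have hdiag := hsvd.diag
  have hε₁ : specNorm (tprod (tprod L Q - tprod Us (sqrtT Sig)) (invSqrtT Sig)) < 1 :=
    lt_of_le_of_lt (le_max_left _ _) h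
  have hε₂ : specNorm (tprod (tprod Rt (tT Qi) - tprod Vs (sqrtT Sig)) (invSqrtT Sig)) < 1 :=
    lt_of_le_of_lt (le_max_right _ _) h
  constructor
  · -- first bound
    set N := specNorm (tprod (tprod Rt (tT Qti - tT Qi)) (sqrtT Sig)) with hNdef
    set ε := specNorm (tprod (tprod Rt (tT Qi) - tprod Vs (sqrtT Sig)) (invSqrtT Sig)) with hεdef
    have hN0 : 0 ≤ N := specNorm_nonneg _
    refine specNorm_le _ (div_nonneg hN0 (by linarith)) fun k => ?_
    have hQk : fSlice Q k * fSlice Qi k = 1 := by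
      have h1 := congrArg (fun T => fSlice T k) hQ.1
      simpa only [fSlice_tprod, fSlice_idT] using h1
    have hV : (fSlice Vs k)ᴴ * fSlice Vs k = 1 := by
      have h1 := congrArg (fun T => fSlice T k) hsvd.orthV
      simpa only [fSlice_tprod, fSlice_tT, fSlice_idT] using h1
    have hCB : (fSlice Qi k)ᴴ * (fSlice Q k)ᴴ = 1 := by
      rw [← conjTranspose_mul, hQk, conjTranspose_one]
    have hT : fSlice (tprod (tprod (tprod (sqrtT Sig) Qti) Q) (sqrtT Sig) - Sig) k
        = fSlice (sqrtT Sig) k * fSlice Qti k * fSlice Q k * fSlice (sqrtT Sig) k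
          - fSlice Sig k := by
      rw [fSlice_sub, fSlice_tprod, fSlice_tprod, fSlice_tprod]
    have hXH : (fSlice (sqrtT Sig) k * fSlice Qti k * fSlice Q k * fSlice (sqrtT Sig) k
          - fSlice Sig k)ᴴ
        = fSlice (sqrtT Sig) k * ((fSlice Q k)ᴴ * (fSlice Qti k)ᴴ - 1) * fSlice (sqrtT Sig) k := by
      rw [conjTranspose_sub, conjTranspose_mul, conjTranspose_mul, conjTranspose_mul,
        sqrtT_herm Sig hdiag k, sig_herm Sig hdiag k, ← sqrtT_mul_self Sig hdiag k]
      noncomm_ring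
    have hNk : ‖fSlice Rt k * ((fSlice Qti k)ᴴ - (fSlice Qi k)ᴴ) * fSlice (sqrtT Sig) k‖ ≤ N := by
      have h1 := matSpecNorm_le_specNorm (tprod (tprod Rt (tT Qti - tT Qi)) (sqrtT Sig)) k
      rw [matSpecNorm_eq, fSlice_tprod, fSlice_tprod, fSlice_sub, fSlice_tT, fSlice_tT] at h1
      exact h1
    have hεk : ‖(fSlice Rt k * (fSlice Qi k)ᴴ - fSlice Vs k * fSlice (sqrtT Sig) k)
        * fSlice (invSqrtT Sig) k‖ ≤ ε := by
      have h1 := matSpecNorm_le_specNorm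
        (tprod (tprod Rt (tT Qi) - tprod Vs (sqrtT Sig)) (invSqrtT Sig)) k
      rw [matSpecNorm_eq, fSlice_tprod, fSlice_sub, fSlice_tprod, fSlice_tprod, fSlice_tT] at h1
      exact h1
    rw [matSpecNorm_eq, hT, ← Matrix.l2_opNorm_conjTranspose, hXH]
    exact key_ineq (fSlice Vs k) (fSlice Rt k) ((fSlice Qti k)ᴴ) ((fSlice Q k)ᴴ)
      ((fSlice Qi k)ᴴ) (fSlice (sqrtT Sig) k) (fSlice (invSqrtT Sig) k)
      hV hCB (invSqrtT_mul_sqrtT Sig hdiag k) N ε hNk hεk hε₂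
  · -- second bound
    set N := specNorm (tprod (tprod L (Qt - Q)) (sqrtT Sig)) with hNdef
    set ε := specNorm (tprod (tprod L Q - tprod Us (sqrtT Sig)) (invSqrtT Sig)) with hεdef
    have hN0 : 0 ≤ N := specNorm_nonneg _
    refine specNorm_le _ (div_nonneg hN0 (by linarith)) fun k => ?_
    have hQk : fSlice Q k * fSlice Qi k = 1 := by
      have h1 := congrArg (fun T => fSlice T k) hQ.1
      simpa only [fSlice_tprod, fSlice_idT] using h1
    have hU : (fSlice Us k)ᴴ * fSlice Us k = 1 := by
      have h1 := congrArg (fun T => fSlice T k) hsvd.orthU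
      simpa only [fSlice_tprod, fSlice_tT, fSlice_idT] using h1
    have hT : fSlice (tprod (tprod (tprod (sqrtT Sig) (tT Qt)) (tT Qi)) (sqrtT Sig) - Sig) k
        = fSlice (sqrtT Sig) k * (fSlice Qt k)ᴴ * (fSlice Qi k)ᴴ * fSlice (sqrtT Sig) k
          - fSlice Sig k := by
      rw [fSlice_sub, fSlice_tprod, fSlice_tprod, fSlice_tprod, fSlice_tT, fSlice_tT]
    have hXH : (fSlice (sqrtT Sig) k * (fSlice Qt k)ᴴ * (fSlice Qi k)ᴴ * fSlice (sqrtT Sig) k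
          - fSlice Sig k)ᴴ
        = fSlice (sqrtT Sig) k * (fSlice Qi k * fSlice Qt k - 1) * fSlice (sqrtT Sig) k := by
      rw [conjTranspose_sub, conjTranspose_mul, conjTranspose_mul, conjTranspose_mul,
        conjTranspose_conjTranspose, conjTranspose_conjTranspose,
        sqrtT_herm Sig hdiag k, sig_herm Sig hdiag k, ← sqrtT_mul_self Sig hdiag k]
      noncomm_ring
    have hNk : ‖fSlice L k * (fSlice Qt k - fSlice Q k) * fSlice (sqrtT Sig) k‖ ≤ N := by
      have h1 := matSpecNorm_le_specNorm (tprod (tprod L (Qt - Q)) (sqrtT Sig)) k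
      rw [matSpecNorm_eq, fSlice_tprod, fSlice_tprod, fSlice_sub] at h1
      exact h1
    have hεk : ‖(fSlice L k * fSlice Q k - fSlice Us k * fSlice (sqrtT Sig) k)
        * fSlice (invSqrtT Sig) k‖ ≤ ε := by
      have h1 := matSpecNorm_le_specNorm
        (tprod (tprod L Q - tprod Us (sqrtT Sig)) (invSqrtT Sig)) k
      rw [matSpecNorm_eq, fSlice_tprod, fSlice_sub, fSlice_tprod, fSlice_tprod] at h1
      exact h1
    rw [matSpecNorm_eq, hT, ← Matrix.l2_opNorm_conjTranspose, hXH]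
    exact key_ineq (fSlice Us k) (fSlice L k) (fSlice Qt k) (fSlice Qi k)
      (fSlice Q k) (fSlice (sqrtT Sig) k) (fSlice (invSqrtT Sig) k)
      hU hQk (invSqrtT_mul_sqrtT Sig hdiag k) N ε hNk hεk hε₁
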